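/- Let J = [[2 f''(0) K_DD, f'(0) K_DG], [-f'(0) K_DG^T, 0]] where f''(0) < 0, f'(0) ≠ 0, K_DD is symmetric positive definite, and K_DG has full column rank. Then J is Hurwitz. -/

import Mathlib

open Matrix Complex

def IsHurwitz {ι : Type*} [Fintype ι] [DecidableEq ι] (A : Matrix ι ι ℝ) : Prop :=
  ∀ μ ∈ spectrum ℂ (A.map Complex.ofReal), μ.re < 0

-- quadratic form real part
lemma re_quad {n : ℕ} (K : Matrix (Fin n) (Fin n) ℝ) (x : Fin n → ℂ) :
    (star x ⬝ᵥ ((K.map Complex.ofReal) *ᵥ x)).re =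
      (fun i => (x i).re) ⬝ᵥ (K *ᵥ fun i => (x i).re)
      + (fun i => (x i).im) ⬝ᵥ (K *ᵥ fun i => (x i).im) := by
  simp only [dotProduct, mulVec, Finset.mul_sum, Complex.re_sum, Pi.star_apply,
    Matrix.map_apply, ← Finset.sum_add_distrib]
  refine Finset.sum_congr rfl fun i _ => Finset.sum_congr rfl fun j _ => ?_
  simp [Complex.mul_re, Complex.mul_im]

lemma norm_dot {n : ℕ} (x : Fin n → ℂ) :
    star x ⬝ᵥ x = ((∑ i, Complex.normSq (x i) : ℝ) : ℂ) := by
  simp only [dotProduct, Pi.star_apply, Complex.ofReal_sum]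
  refine Finset.sum_congr rfl fun i _ => ?_
  rw [RCLike.star_def, ← Complex.normSq_eq_conj_mul_self]

lemma normSq_sum_pos {n : ℕ} {x : Fin n → ℂ} (hx : x ≠ 0) :
    0 < ∑ i, Complex.normSq (x i) := by
  obtain ⟨i, hi⟩ := Function.ne_iff.mp hx
  exact Finset.sum_pos' (fun j _ => Complex.normSq_nonneg _)
    ⟨i, Finset.mem_univ i, by simpa using Complex.normSq_pos.mpr hi⟩

lemma mulVec_inj {n m : ℕ} (B : Matrix (Fin n) (Fin m) ℝ) (hr : B.rank = m)
    (a : Fin m → ℝ) (ha : B *ᵥ a = 0) : a = 0 := by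
  have h := LinearMap.finrank_range_add_finrank_ker B.mulVecLin
  rw [show Module.finrank ℝ (Fin m → ℝ) = m by simp] at h
  have : B.rank = Module.finrank ℝ (LinearMap.range B.mulVecLin) := rfl
  rw [← this, hr] at h
  have hker : Module.finrank ℝ (LinearMap.ker B.mulVecLin) = 0 := by omega
  have : LinearMap.ker B.mulVecLin = ⊥ := Submodule.finrank_eq_zero.mp hker
  have ha' : a ∈ LinearMap.ker B.mulVecLin := by
    simpa [Matrix.mulVecLin_apply] using ha
  rw [this] at ha'
  simpa using ha'

lemma mulVec_inj_c {n m : ℕ} (B : Matrix (Fin n) (Fin m) ℝ) (hr : B.rank = m)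
    (y : Fin m → ℂ) (hy : (B.map Complex.ofReal) *ᵥ y = 0) : y = 0 := by
  have hre : B *ᵥ (fun j => (y j).re) = 0 := by
    ext i
    have := congrFun hy i
    simpa [mulVec, dotProduct, Complex.re_sum, Complex.mul_re]
      using congrArg Complex.re this
  have him : B *ᵥ (fun j => (y j).im) = 0 := by
    ext i
    have := congrFun hy i
    simpa [mulVec, dotProduct, Complex.im_sum, Complex.mul_im]
      using congrArg Complex.im this
  have h1 := mulVec_inj B hr _ hre
  have h2 := mulVec_inj B hr _ him
  ext j
  exact Complex.ext (congrFun h1 j) (congrFun h2 j)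

theorem gan_jacobian_hurwitz {n m : ℕ} (f'0 f''0 : ℝ)
    (hf'' : f''0 < 0) (hf' : f'0 ≠ 0)
    (K_DD : Matrix (Fin n) (Fin n) ℝ) (hsym : K_DD.IsSymm) (hpd : K_DD.PosDef)
    (K_DG : Matrix (Fin n) (Fin m) ℝ) (hr : K_DG.rank = m) :
    IsHurwitz (fromBlocks ((2 * f''0) • K_DD) (f'0 • K_DG) ((-f'0) • K_DGᵀ) 0) := by
  intro μ hμ
  -- extract eigenvector
  rw [spectrum.mem_iff, Matrix.isUnit_iff_isUnit_det, isUnit_iff_ne_zero, not_not,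
    ← Matrix.exists_mulVec_eq_zero_iff] at hμ
  obtain ⟨v, hv, hμ⟩ := hμ
  rw [sub_mulVec, sub_eq_zero, Matrix.algebraMap_eq_diagonal] at hμ
  replace hμ : (fromBlocks ((2 * f''0) • K_DD) (f'0 • K_DG) ((-f'0) • K_DGᵀ) 0).map
      Complex.ofReal *ᵥ v = μ • v := by
    rw [← hμ]; ext i; simp [mulVec_diagonal]
  set Kc := K_DD.map Complex.ofReal with hKc
  set Bc := K_DG.map Complex.ofReal with hBc
  have hmap : (fromBlocks ((2 * f''0) • K_DD) (f'0 • K_DG) ((-f'0) • K_DGᵀ) 0).map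
      Complex.ofReal =
      fromBlocks (((2 * f''0 : ℝ) : ℂ) • Kc) ((f'0 : ℂ) • Bc) (((-f'0 : ℝ) : ℂ) • Bcᵀ) 0 := by
    ext i j
    cases i <;> cases j <;>
      simp [fromBlocks, Matrix.map_apply, Complex.ofReal_mul, hKc, hBc]
  rw [hmap] at hμ
  set x : Fin n → ℂ := fun i => v (Sum.inl i) with hx
  set y : Fin m → ℂ := fun j => v (Sum.inr j) with hy
  have hvelim : v = Sum.elim x y := by ext (i | j) <;> rfl
  rw [hvelim, fromBlocks_mulVec] at hμ
  have heq1 : ((2 * f''0 : ℝ) : ℂ) • Kc *ᵥ x + (f'0 : ℂ) • Bc *ᵥ y = μ • x := by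
    have := congrFun hμ
    ext i
    simpa [smul_mulVec] using this (Sum.inl i)
  have heq2 : (-(f'0 : ℂ)) • (Bcᵀ *ᵥ x) = μ • y := by
    have := congrFun hμ
    ext j
    simpa [smul_mulVec, Complex.ofReal_neg, neg_smul, Matrix.neg_mulVec] using this (Sum.inr j)
  -- x ≠ 0
  have hxne : x ≠ 0 := by
    intro hx0
    rw [hx0] at heq1 heq2
    simp only [mulVec_zero, smul_zero, zero_add, smul_zero] at heq1 heq2
    have hy0 : y = 0 := by
      apply mulVec_inj_c K_DG hr
      have h0 : (f'0 : ℂ) • Bc *ᵥ y = 0 := heq1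
      rw [smul_eq_zero] at h0
      have hf'c : (f'0 : ℂ) ≠ 0 := by exact_mod_cast hf'
      exact (h0.resolve_left hf'c)
    apply hv
    rw [hvelim, hx0, hy0]
    ext (i | j) <;> rfl
  -- dot products
  have hdot1 := congrArg (fun w => star x ⬝ᵥ w) heq1
  have hdot2 := congrArg (fun w => star y ⬝ᵥ w) heq2
  simp only [dotProduct_add, dotProduct_smul, smul_eq_mul] at hdot1 hdot2
  set c1 := star x ⬝ᵥ (Kc *ᵥ x) with hc1
  set c2 := star x ⬝ᵥ (Bc *ᵥ y) with hc2
  set c3 := star y ⬝ᵥ (Bcᵀ *ᵥ x) with hc3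
  -- c3 = conj c2
  have hconj : c3 = (starRingEnd ℂ) c2 := by
    rw [hc2, hc3]
    simp only [dotProduct, mulVec, dotProduct, map_sum, Finset.mul_sum, Pi.star_apply,
      _root_.map_mul, Matrix.map_apply, Matrix.transpose_apply, hBc]
    rw [Finset.sum_comm]
    refine Finset.sum_congr rfl fun j _ => Finset.sum_congr rfl fun i _ => ?_
    simp [Complex.conj_ofReal, RCLike.star_def]
    ring
  have hnx := norm_dot x
  have hny := norm_dot y
  set Nx := ∑ i, Complex.normSq (x i) with hNx
  set Ny := ∑ j, Complex.normSq (y j) with hNy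
  rw [hnx] at hdot1
  rw [hny] at hdot2
  -- take real parts and add
  have hre1 := congrArg Complex.re hdot1
  have hre2 := congrArg Complex.re hdot2
  rw [hconj] at hre2
  simp only [Complex.add_re, Complex.mul_re, Complex.ofReal_re, Complex.ofReal_im,
    Complex.conj_re, Complex.conj_im, Complex.neg_re, Complex.neg_im] at hre1 hre2
  -- key positivity
  have hq : 0 < c1.re := by
    rw [hc1, hKc, re_quad]
    rcases Function.ne_iff.mp hxne with ⟨i, hi⟩
    have h1 : (fun i => (x i).re) ≠ 0 ∨ (fun i => (x i).im) ≠ 0 := by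
      by_contra hcon
      push_neg at hcon
      apply hi
      exact Complex.ext (congrFun hcon.1 i) (congrFun hcon.2 i)
    have hsd := hpd.posSemidef
    rcases h1 with h1 | h1
    · have := hpd.dotProduct_mulVec_pos h1
      have h2 := hsd.dotProduct_mulVec_nonneg (fun i => (x i).im)
      simp only [star_trivial] at this h2
      linarith
    · have := hpd.dotProduct_mulVec_pos h1
      have h2 := hsd.dotProduct_mulVec_nonneg (fun i => (x i).re)
      simp only [star_trivial] at this h2
      linarith
  have hNxpos : 0 < Nx := normSq_sum_pos hxne
  have hNyng : 0 ≤ Ny := Finset.sum_nonneg fun j _ => Complex.normSq_nonneg _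
  -- combine: μ.re * (Nx + Ny) = 2 * f''0 * c1.re
  nlinarith [mul_pos (mul_pos (show (0:ℝ) < -(2*f''0) by linarith) hq)
    (show (0:ℝ) < Nx + Ny by linarith)]
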